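/- arXiv:0906.4059 — 2 statements merged into one kernel-verified Lean document; each statement's English description precedes it below -/
import Mathlib

section
/- For the random-walk dynamical system (X,𝒜,μ,T) and the exhaustive family 𝒱={B_{γ,r}×[0,1)² : γ∈ℤ^d, r∈ℤ⁺}, property (A1) holds: for any fixed t∈ℤ, μ(T^{-t}V Δ V)=o(μ(V)) as μ(V)→∞ along 𝒱. -/
noncomputable section

open MeasureTheory Filter Topology
open scoped ENNReal

/-- The phase space `X = ℤ^d × [0,1)²` (embedded in `ℤ^d × ℝ²`; the invariant measure
is supported on `ℤ^d × [0,1)²`). -/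
abbrev RWSpace (d : ℕ) := (Fin d → ℤ) × ℝ × ℝ

/-- The data of a random walk on `ℤ^d`: a probability distribution `p` on `ℤ^d` together
with an enumeration `e` of `ℤ^d` (whose restriction to the support of `p` enumerates the
set `D` of active directions; indices carrying zero probability contribute empty
rectangles and do not affect the map). -/
structure RW (d : ℕ) where
  p : (Fin d → ℤ) → ℝ
  nonneg : ∀ β, 0 ≤ p β
  total : HasSum p 1
  e : ℕ ≃ (Fin d → ℤ)

namespace RW

variable {d : ℕ}

/-- The cumulative sums `q_k = Σ_{j<k} p_{β^{(j)}}`. -/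
def q (R : RW d) (k : ℕ) : ℝ := ∑ j ∈ Finset.range k, R.p (R.e j)

/-- The index `k` such that `y ∈ [q_k, q_{k+1})` (for `y ∈ [0,1)`). -/
def idx (R : RW d) (y : ℝ) : ℕ := sSup {j | R.q j ≤ y}

/-- The random-walk (coupled bakers') map
`T(α; y₁, y₂) = (α + β^{(k)}; p_{β^{(k)}}⁻¹(y₁ − q_{k-1}), p_{β^{(k)}} y₂ + q_{k-1})`. -/
def T (R : RW d) : RWSpace d → RWSpace d := fun x =>
  (x.1 + R.e (R.idx x.2.1),
   (x.2.1 - R.q (R.idx x.2.1)) / R.p (R.e (R.idx x.2.1)),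
   R.p (R.e (R.idx x.2.1)) * x.2.2 + R.q (R.idx x.2.1))

/-- The inverse of the random-walk map. -/
def Tinv (R : RW d) : RWSpace d → RWSpace d := fun x =>
  (x.1 - R.e (R.idx x.2.2),
   R.p (R.e (R.idx x.2.2)) * x.2.1 + R.q (R.idx x.2.2),
   (x.2.2 - R.q (R.idx x.2.2)) / R.p (R.e (R.idx x.2.2)))

/-- The iterate `T^t` for `t ∈ ℤ` (using the inverse map for negative times). -/
def iterZ (R : RW d) (t : ℤ) : RWSpace d → RWSpace d :=
  if 0 ≤ t then (R.T)^[t.toNat] else (R.Tinv)^[(-t).toNat]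

end RW

/-- The invariant measure `μ`: counting measure on `ℤ^d` times Lebesgue measure on
`[0,1)²`. -/
def rwMeasure (d : ℕ) : Measure (RWSpace d) :=
  (Measure.count : Measure (Fin d → ℤ)).prod
    ((volume.restrict (Set.Ico (0:ℝ) 1)).prod (volume.restrict (Set.Ico (0:ℝ) 1)))

/-- The set `V = B_{γ,r} × [0,1)²`, where `B_{γ,r}` is the square box of center `γ` and
radius `r` in `ℤ^d`. -/
def rwBox {d : ℕ} (γ : Fin d → ℤ) (r : ℕ) : Set (RWSpace d) :=
  {x | (∀ i, |x.1 i - γ i| ≤ (r : ℤ)) ∧ x.2.1 ∈ Set.Ico (0:ℝ) 1 ∧ x.2.2 ∈ Set.Ico (0:ℝ) 1}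

/-- The exhaustive family `𝒱 = {B_{γ,r} × [0,1)² : γ ∈ ℤ^d, r ∈ ℤ⁺}`. -/
def rwFamily (d : ℕ) : Set (Set (RWSpace d)) :=
  {V | ∃ γ : Fin d → ℤ, ∃ r : ℕ, 1 ≤ r ∧ V = rwBox γ r}

/-- The (μ-uniform) infinite-volume limit of a set function `φ` along the family `𝒱`
equals `L`. -/
def IVLim {Y : Type*} [MeasurableSpace Y] (μ : Measure Y) (𝒱 : Set (Set Y))
    (φ : Set Y → ℝ) (L : ℝ) : Prop :=
  ∀ ε > 0, ∃ M : ℝ, 0 < M ∧ ∀ V ∈ 𝒱, M ≤ (μ V).toReal → |φ V - L| < ε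

/-- The normalized average `μ_V(F) = (1/μ(V)) ∫_V F dμ` of `F` over a set `V`. -/
def avgOn {Y : Type*} [MeasurableSpace Y] (μ : Measure Y) (F : Y → ℝ) (V : Set Y) : ℝ :=
  (∫ x in V, F x ∂μ) / (μ V).toReal

/-- `F` possesses the infinite-volume average `L` along the family `𝒱`. -/
def HasAvg {Y : Type*} [MeasurableSpace Y] (μ : Measure Y) (𝒱 : Set (Set Y))
    (F : Y → ℝ) (L : ℝ) : Prop :=
  IVLim μ 𝒱 (avgOn μ F) L

namespace RW
variable {d : ℕ} (R : RW d)

lemma q_mono : Monotone R.q := by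
  intro a b hab
  exact Finset.sum_le_sum_of_subset_of_nonneg (Finset.range_subset_range.2 hab)
    (fun i _ _ => R.nonneg _)

lemma q_zero : R.q 0 = 0 := by simp [q]

lemma hasSum_pe : HasSum (fun j => R.p (R.e j)) 1 := (Equiv.hasSum_iff R.e).2 R.total

lemma q_tendsto : Filter.Tendsto R.q Filter.atTop (𝓝 1) := R.hasSum_pe.tendsto_sum_nat

lemma q_le_one (k : ℕ) : R.q k ≤ 1 := by
  have := R.hasSum_pe.tsum_eq
  calc R.q k ≤ ∑' j, R.p (R.e j) :=
        Summable.sum_le_tsum _ (fun i _ => R.nonneg _) R.hasSum_pe.summable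
    _ = 1 := this

lemma q_nonneg (k : ℕ) : 0 ≤ R.q k := by
  simpa [q_zero] using R.q_mono (Nat.zero_le k)

/-- For `0 ≤ y < 1`, `q (idx y) ≤ y < q (idx y + 1)`. -/
lemma idx_spec {y : ℝ} (h0 : 0 ≤ y) (h1 : y < 1) :
    R.q (R.idx y) ≤ y ∧ y < R.q (R.idx y + 1) := by
  have hne : {j | R.q j ≤ y}.Nonempty := ⟨0, by simpa [q_zero] using h0⟩
  have hbdd : BddAbove {j | R.q j ≤ y} := by
    obtain ⟨K, hK⟩ := (R.q_tendsto.eventually (eventually_gt_nhds h1)).exists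
    exact ⟨K, fun j hj => by
      by_contra hlt
      exact absurd (le_trans (R.q_mono (le_of_not_ge hlt)) hj) (not_le.2 hK)⟩
  constructor
  · exact Nat.sSup_mem hne hbdd
  · by_contra hle
    have h2 : R.idx y + 1 ≤ R.idx y :=
      le_csSup hbdd (le_of_not_gt hle)
    omega

lemma p_idx_pos {y : ℝ} (h0 : 0 ≤ y) (h1 : y < 1) : 0 < R.p (R.e (R.idx y)) := by
  obtain ⟨ha, hb⟩ := R.idx_spec h0 h1
  have : R.q (R.idx y + 1) = R.q (R.idx y) + R.p (R.e (R.idx y)) := by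
    simp [q, Finset.sum_range_succ]
  linarith

lemma idx_eq_of (k : ℕ) {y : ℝ} (h1 : R.q k ≤ y) (h2 : y < R.q (k+1)) :
    R.idx y = k := by
  have hsub : {j | R.q j ≤ y} ⊆ Set.Iic k := by
    intro j hj
    by_contra hjk
    simp only [Set.mem_Iic, not_le] at hjk
    have : R.q (k+1) ≤ R.q j := R.q_mono (by omega)
    exact absurd hj (not_le.2 (lt_of_lt_of_le h2 this))
  have hbdd : BddAbove {j | R.q j ≤ y} := ⟨k, fun j hj => hsub hj⟩
  refine le_antisymm ?_ (le_csSup hbdd h1)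
  exact csSup_le ⟨k, h1⟩ (fun j hj => hsub hj)

lemma idx_fiber (k : ℕ) (hk : 1 ≤ k) :
    R.idx ⁻¹' {k} = Set.Ico (R.q k) (R.q (k+1)) := by
  ext y
  simp only [Set.mem_preimage, Set.mem_singleton_iff, Set.mem_Ico]
  constructor
  · rintro rfl
    set S := {j | R.q j ≤ y} with hS
    rcases Set.eq_empty_or_nonempty S with he | hne
    · exfalso; have : R.idx y = 0 := by
        simp only [idx, ← hS, he]; exact csSup_empty
      omega
    rcases Set.finite_or_infinite S with hf | hinf
    · have hbdd : BddAbove S := hf.bddAbove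
      have hmem : R.idx y ∈ S := Nat.sSup_mem hne hbdd
      refine ⟨hmem, ?_⟩
      by_contra hle
      have : R.idx y + 1 ∈ S := le_of_not_gt hle
      have h2 : R.idx y + 1 ≤ sSup S := le_csSup hbdd this
      simp only [idx, ← hS] at h2 ⊢
      omega
    · exfalso
      have : R.idx y = 0 := Set.Infinite.Nat.sSup_eq_zero hinf
      omega
  · rintro ⟨h1, h2⟩
    exact R.idx_eq_of k h1 h2

lemma measurable_idx : Measurable R.idx := by
  have : ∀ k : ℕ, MeasurableSet (R.idx ⁻¹' {k}) := by
    intro k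
    rcases Nat.eq_zero_or_pos k with rfl | hk
    · have : R.idx ⁻¹' {0} = (⋃ k : ℕ, ⋃ _ : 1 ≤ k, R.idx ⁻¹' {k})ᶜ := by
        ext y
        simp only [Set.mem_preimage, Set.mem_singleton_iff, Set.mem_compl_iff,
          Set.mem_iUnion]
        constructor
        · intro h0; rintro ⟨k, hk, hy⟩; omega
        · intro h
          by_contra h0
          exact h ⟨R.idx y, by omega, rfl⟩
      rw [this]
      exact (MeasurableSet.iUnion fun k => MeasurableSet.iUnion fun hk => by
        rw [R.idx_fiber k hk]; exact measurableSet_Ico).compl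
    · rw [R.idx_fiber k hk]; exact measurableSet_Ico
  exact measurable_to_countable' fun k => this k

lemma measurable_T : Measurable R.T := by
  have h1 : Measurable fun y : ℝ => R.idx y := R.measurable_idx
  have hq : Measurable fun y : ℝ => R.q (R.idx y) :=
    (measurable_from_top (f := R.q)).comp h1
  have hp : Measurable fun y : ℝ => R.p (R.e (R.idx y)) :=
    (measurable_from_top (f := fun n => R.p (R.e n))).comp h1
  have he : Measurable fun y : ℝ => R.e (R.idx y) :=
    (measurable_from_top (f := fun n => R.e n)).comp h1
  refine Measurable.prod ?_ (Measurable.prod ?_ ?_)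
  · exact (measurable_fst).add (he.comp (measurable_fst.comp measurable_snd))
  · exact ((measurable_fst.comp measurable_snd).sub
      (hq.comp (measurable_fst.comp measurable_snd))).div
      (hp.comp (measurable_fst.comp measurable_snd))
  · exact ((hp.comp (measurable_fst.comp measurable_snd)).mul
      (measurable_snd.comp measurable_snd)).add
      (hq.comp (measurable_fst.comp measurable_snd))

lemma measurable_Tinv : Measurable R.Tinv := by
  have h1 : Measurable fun y : ℝ => R.idx y := R.measurable_idx
  have hq : Measurable fun y : ℝ => R.q (R.idx y) :=
    (measurable_from_top (f := R.q)).comp h1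
  have hp : Measurable fun y : ℝ => R.p (R.e (R.idx y)) :=
    (measurable_from_top (f := fun n => R.p (R.e n))).comp h1
  have he : Measurable fun y : ℝ => R.e (R.idx y) :=
    (measurable_from_top (f := fun n => R.e n)).comp h1
  refine Measurable.prod ?_ (Measurable.prod ?_ ?_)
  · exact (measurable_fst).sub (he.comp (measurable_snd.comp measurable_snd))
  · exact ((hp.comp (measurable_snd.comp measurable_snd)).mul
      (measurable_fst.comp measurable_snd)).add
      (hq.comp (measurable_snd.comp measurable_snd))
  · exact ((measurable_snd.comp measurable_snd).sub
      (hq.comp (measurable_snd.comp measurable_snd))).div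
      (hp.comp (measurable_snd.comp measurable_snd))

lemma measurable_iterZ (t : ℤ) : Measurable (R.iterZ t) := by
  unfold iterZ
  split
  · exact R.measurable_T.iterate _
  · exact R.measurable_Tinv.iterate _

/-- The unit square `[0,1)²`. -/
def sq : Set (ℝ × ℝ) := Set.Ico (0:ℝ) 1 ×ˢ Set.Ico (0:ℝ) 1

lemma q_succ (k : ℕ) : R.q (k+1) = R.q k + R.p (R.e k) := by
  simp [q, Finset.sum_range_succ]

lemma T_mem_sq {x : RWSpace d} (hx : x.2 ∈ sq) : (R.T x).2 ∈ sq := by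
  obtain ⟨⟨h10, h11⟩, h20, h21⟩ := hx
  set k := R.idx x.2.1 with hk
  obtain ⟨ha, hb⟩ := R.idx_spec h10 h11
  have hp : 0 < R.p (R.e k) := R.p_idx_pos h10 h11
  have hqs := R.q_succ k
  refine ⟨⟨?_, ?_⟩, ?_, ?_⟩
  · exact div_nonneg (by linarith) hp.le
  · simp only [T]; rw [div_lt_one hp]; linarith
  · have := R.q_nonneg k
    have : 0 ≤ R.p (R.e k) * x.2.2 := mul_nonneg hp.le h20
    simp only [T]; linarith [R.q_nonneg k]
  · have h1 : R.p (R.e k) * x.2.2 < R.p (R.e k) := by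
      nlinarith
    have := R.q_le_one (k+1)
    simp only [T]; linarith

lemma Tinv_mem_sq {x : RWSpace d} (hx : x.2 ∈ sq) : (R.Tinv x).2 ∈ sq := by
  obtain ⟨⟨h10, h11⟩, h20, h21⟩ := hx
  set k := R.idx x.2.2 with hk
  obtain ⟨ha, hb⟩ := R.idx_spec h20 h21
  have hp : 0 < R.p (R.e k) := R.p_idx_pos h20 h21
  have hqs := R.q_succ k
  refine ⟨⟨?_, ?_⟩, ?_, ?_⟩
  · have : 0 ≤ R.p (R.e k) * x.2.1 := mul_nonneg hp.le h10
    simp only [Tinv]; linarith [R.q_nonneg k]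
  · have h1 : R.p (R.e k) * x.2.1 < R.p (R.e k) := by nlinarith
    have := R.q_le_one (k+1)
    simp only [Tinv]; linarith
  · exact div_nonneg (by linarith) hp.le
  · simp only [Tinv]; rw [div_lt_one hp]; linarith

/-- A map is "shift-like" if the ℤ^d-displacement and the new fibre coordinate depend
only on the fibre coordinate. -/
def ShiftLike (f : RWSpace d → RWSpace d) : Prop :=
  ∀ (α α' : Fin d → ℤ) (y : ℝ × ℝ),
    f (α, y) = (α - α' + (f (α', y)).1, (f (α', y)).2)

lemma shiftLike_T : ShiftLike R.T := by
  intro α α' y; simp only [T, Prod.mk.injEq]; constructor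
  · abel
  · simp

lemma shiftLike_Tinv : ShiftLike R.Tinv := by
  intro α α' y; simp only [Tinv, Prod.mk.injEq]; constructor
  · abel
  · simp

lemma ShiftLike.iterate {f : RWSpace d → RWSpace d} (hf : ShiftLike f) (n : ℕ) :
    ShiftLike f^[n] := by
  induction n with
  | zero => intro α α' y; simp
  | succ n ih =>
    intro α α' y
    rw [Function.iterate_succ_apply', Function.iterate_succ_apply']
    have h1 := ih α α' y
    rw [h1]
    obtain ⟨a', b'⟩ := f^[n] (α', y)
    have h2 := hf (α - α' + a') a' b'
    simpa using h2

lemma shiftLike_iterZ (t : ℤ) : ShiftLike (R.iterZ t) := by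
  unfold iterZ
  split
  · exact R.shiftLike_T.iterate _
  · exact R.shiftLike_Tinv.iterate _

lemma iterZ_mem_sq (t : ℤ) {x : RWSpace d} (hx : x.2 ∈ sq) : (R.iterZ t x).2 ∈ sq := by
  have key : ∀ (f : RWSpace d → RWSpace d),
      (∀ z : RWSpace d, z.2 ∈ sq → (f z).2 ∈ sq) →
      ∀ n, ∀ z : RWSpace d, z.2 ∈ sq → (f^[n] z).2 ∈ sq := by
    intro f hf n
    induction n with
    | zero => intro z hz; simpa using hz
    | succ n ih =>
      intro z hz
      rw [Function.iterate_succ_apply']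
      exact hf _ (ih z hz)
  unfold iterZ
  split
  · exact key R.T (fun z hz => R.T_mem_sq hz) _ x hx
  · exact key R.Tinv (fun z hz => R.Tinv_mem_sq hz) _ x hx

/-- The ℤ^d-displacement of `iterZ t` as a function of the fibre coordinate. -/
def Phi (t : ℤ) (y : ℝ × ℝ) : Fin d → ℤ := (R.iterZ t (0, y)).1

/-- The fibre action of `iterZ t`. -/
def Psi (t : ℤ) (y : ℝ × ℝ) : ℝ × ℝ := (R.iterZ t (0, y)).2

lemma iterZ_eq (t : ℤ) (α : Fin d → ℤ) (y : ℝ × ℝ) :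
    R.iterZ t (α, y) = (α + R.Phi t y, R.Psi t y) := by
  have := R.shiftLike_iterZ t α 0 y
  simpa [Phi, Psi] using this

lemma measurable_Phi (t : ℤ) : Measurable (R.Phi t) :=
  measurable_fst.comp ((R.measurable_iterZ t).comp measurable_prodMk_left)

lemma Psi_mem_sq (t : ℤ) {y : ℝ × ℝ} (hy : y ∈ sq) : R.Psi t y ∈ sq :=
  R.iterZ_mem_sq t (x := ((0 : Fin d → ℤ), y)) hy

end RW

section Boxes
variable {d : ℕ}

/-- The square box in `ℤ^d`. -/
def zbox (γ : Fin d → ℤ) (r : ℕ) : Set (Fin d → ℤ) := {α | ∀ i, |α i - γ i| ≤ (r : ℤ)}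

/-- The box as a finset. -/
def zboxF (γ : Fin d → ℤ) (r : ℕ) : Finset (Fin d → ℤ) :=
  Fintype.piFinset fun i => Finset.Icc (γ i - r) (γ i + r)

lemma zbox_coe (γ : Fin d → ℤ) (r : ℕ) : zbox γ r = ↑(zboxF γ r) := by
  ext α
  simp only [zbox, zboxF, Set.mem_setOf_eq, Finset.coe_sort_coe, Finset.mem_coe,
    Fintype.mem_piFinset, Finset.mem_Icc]
  constructor
  · intro h i; have := h i; rw [abs_le] at this; omega
  · intro h i; have := h i; rw [abs_le]; omega

lemma zboxF_card (γ : Fin d → ℤ) (r : ℕ) : (zboxF γ r).card = (2*r+1)^d := by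
  rw [zboxF, Fintype.card_piFinset]
  have : ∀ i, (Finset.Icc (γ i - r) (γ i + r)).card = 2*r+1 := by
    intro i; rw [Int.card_Icc]; omega
  simp [this]

lemma measurableSet_all (s : Set (Fin d → ℤ)) : MeasurableSet s :=
  (Set.to_countable s).measurableSet

lemma count_zbox (γ : Fin d → ℤ) (r : ℕ) :
    Measure.count (zbox γ r) = ((2*r+1)^d : ℕ) := by
  rw [zbox_coe, Measure.count_apply_finset, zboxF_card]

lemma zboxF_mono (γ : Fin d → ℤ) {a b : ℕ} (h : a ≤ b) : zboxF γ a ⊆ zboxF γ b := by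
  intro α
  simp only [zboxF, Fintype.mem_piFinset, Finset.mem_Icc]
  intro hx i; have := hx i; omega

lemma zbox_mono (γ : Fin d → ℤ) {a b : ℕ} (h : a ≤ b) : zbox γ a ⊆ zbox γ b := by
  rw [zbox_coe, zbox_coe]
  exact Finset.coe_subset.2 (zboxF_mono γ h)

lemma count_zbox_diff (γ : Fin d → ℤ) {a b : ℕ} (h : a ≤ b) :
    Measure.count (zbox γ b \ zbox γ a) = (((2*b+1)^d - (2*a+1)^d : ℕ)) := by
  rw [zbox_coe, zbox_coe, ← Finset.coe_sdiff, Measure.count_apply_finset,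
    Finset.card_sdiff_of_subset (zboxF_mono γ h), zboxF_card, zboxF_card]

end Boxes

section MeasureFacts
variable {d : ℕ}

instance : SigmaFinite (Measure.count : Measure (Fin d → ℤ)) := by
  refine Measure.sigmaFinite_of_countable (S := Set.range fun x : Fin d → ℤ => ({x} : Set _))
    (Set.countable_range _) ?_ ?_
  · rintro s ⟨x, rfl⟩; simp [Measure.count_singleton]
  · ext x; simp

/-- The fibre measure. -/
def nuM : Measure (ℝ × ℝ) :=
  ((volume.restrict (Set.Ico (0:ℝ) 1)).prod (volume.restrict (Set.Ico (0:ℝ) 1)))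

instance : SigmaFinite (nuM) := by unfold nuM; infer_instance

lemma rwMeasure_eq : rwMeasure d = (Measure.count : Measure (Fin d → ℤ)).prod nuM := rfl

lemma nuM_sq : nuM RW.sq = 1 := by
  rw [nuM, RW.sq, Measure.prod_prod]
  simp [Real.volume_Ico]

lemma nuM_univ : nuM Set.univ = 1 := by
  rw [← Set.univ_prod_univ, nuM, Measure.prod_prod]
  simp [Measure.restrict_apply_univ, Real.volume_Ico]

lemma measurableSet_sq : MeasurableSet RW.sq :=
  measurableSet_Ico.prod measurableSet_Ico

lemma nuM_sq_compl : nuM RW.sqᶜ = 0 := by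
  have := measure_compl (μ := nuM) measurableSet_sq (by rw [nuM_sq]; exact ENNReal.one_ne_top)
  rw [nuM_univ, nuM_sq] at this
  simpa using this

lemma rwMeasure_prod (s : Set (Fin d → ℤ)) (t : Set (ℝ × ℝ)) :
    rwMeasure d (s ×ˢ t) = Measure.count s * nuM t := by
  rw [rwMeasure_eq]; exact Measure.prod_prod s t

lemma rwMeasure_bad : rwMeasure d (Set.univ ×ˢ RW.sqᶜ) = 0 := by
  rw [rwMeasure_prod, nuM_sq_compl, mul_zero]

lemma rwBox_eq (γ : Fin d → ℤ) (r : ℕ) : rwBox γ r = zbox γ r ×ˢ RW.sq := by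
  ext x
  constructor
  · rintro ⟨h1, h2, h3⟩; exact ⟨h1, h2, h3⟩
  · rintro ⟨h1, h2, h3⟩; exact ⟨h1, h2, h3⟩

lemma rwMeasure_rwBox (γ : Fin d → ℤ) (r : ℕ) :
    rwMeasure d (rwBox γ r) = ((2*r+1)^d : ℕ) := by
  rw [rwBox_eq, rwMeasure_prod, nuM_sq, count_zbox, mul_one]

end MeasureFacts

section MainBound
variable {d : ℕ} (R : RW d) (t : ℤ)

lemma measurable_sq_fiber (β : Fin d → ℤ) :
    MeasurableSet (RW.sq ∩ R.Phi t ⁻¹' {β}) :=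
  measurableSet_sq.inter ((R.measurable_Phi t) (measurableSet_all {β}))

lemma nuM_fiber_sum (S : Set (Fin d → ℤ)) :
    nuM (RW.sq ∩ R.Phi t ⁻¹' S) =
      ∑' β : Fin d → ℤ, S.indicator (fun β => nuM (RW.sq ∩ R.Phi t ⁻¹' {β})) β := by
  have hset : RW.sq ∩ R.Phi t ⁻¹' S
      = ⋃ β : Fin d → ℤ, (RW.sq ∩ R.Phi t ⁻¹' {β}) ∩ R.Phi t ⁻¹' S := by
    ext y
    simp only [Set.mem_inter_iff, Set.mem_iUnion, Set.mem_preimage,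
      Set.mem_singleton_iff]
    constructor
    · rintro ⟨h1, h2⟩; exact ⟨R.Phi t y, ⟨⟨h1, rfl⟩, h2⟩⟩
    · rintro ⟨β, ⟨⟨h1, _⟩, h2⟩⟩; exact ⟨h1, h2⟩
  rw [hset, measure_iUnion]
  · refine tsum_congr fun β => ?_
    by_cases hβ : β ∈ S
    · rw [Set.indicator_of_mem hβ]
      congr 1
      ext y
      simp only [Set.mem_inter_iff, Set.mem_preimage, Set.mem_singleton_iff]
      constructor
      · rintro ⟨⟨h1, h2⟩, _⟩; exact ⟨h1, h2⟩
      · rintro ⟨h1, h2⟩; exact ⟨⟨h1, h2⟩, h2 ▸ hβ⟩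
    · rw [Set.indicator_of_notMem hβ]
      have he : (RW.sq ∩ R.Phi t ⁻¹' {β}) ∩ R.Phi t ⁻¹' S = (∅ : Set (ℝ × ℝ)) := by
        ext y
        simp only [Set.mem_inter_iff, Set.mem_preimage, Set.mem_singleton_iff,
          Set.mem_empty_iff_false, iff_false, not_and]
        rintro ⟨_, rfl⟩ h2
        exact hβ h2
      rw [he]
      exact measure_empty
  · intro β β' hne
    refine Set.disjoint_left.2 fun y hy hy' => hne ?_
    obtain ⟨⟨_, h1⟩, _⟩ := hy
    obtain ⟨⟨_, h2⟩, _⟩ := hy'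
    rw [← h1, ← h2]
  · intro β
    exact (measurable_sq_fiber R t β).inter ((R.measurable_Phi t) (measurableSet_all S))

lemma nuM_fiber_total :
    ∑' β : Fin d → ℤ, nuM (RW.sq ∩ R.Phi t ⁻¹' {β}) = 1 := by
  have := nuM_fiber_sum R t Set.univ
  simpa [nuM_sq] using this.symm

lemma pre_zbox (γ β : Fin d → ℤ) (r : ℕ) :
    (fun α => α + β) ⁻¹' zbox γ r = zbox (γ - β) r := by
  ext α
  simp only [zbox, Set.mem_preimage, Set.mem_setOf_eq, Pi.add_apply, Pi.sub_apply]
  refine forall_congr' fun i => ?_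
  rw [show α i + β i - γ i = α i - (γ i - β i) by ring]

lemma symmDiff_incl (γ : Fin d → ℤ) (r : ℕ) :
    symmDiff (R.iterZ t ⁻¹' rwBox γ r) (rwBox γ r) ⊆
      (Set.univ ×ˢ RW.sqᶜ) ∪
        ⋃ β : Fin d → ℤ,
          (symmDiff ((fun α => α + β) ⁻¹' zbox γ r) (zbox γ r))
            ×ˢ (RW.sq ∩ R.Phi t ⁻¹' {β}) := by
  intro x hx
  by_cases hsq : x.2 ∈ RW.sq
  · right
    set β := R.Phi t x.2 with hβ
    have hA : x ∈ R.iterZ t ⁻¹' rwBox γ r ↔ x.1 + β ∈ zbox γ r := by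
      rw [Set.mem_preimage, show x = (x.1, x.2) from rfl, R.iterZ_eq, rwBox_eq]
      simp only [Set.mem_prod]
      exact and_iff_left (R.Psi_mem_sq t hsq)
    have hV : x ∈ rwBox γ r ↔ x.1 ∈ zbox γ r := by
      rw [rwBox_eq, Set.mem_prod]
      exact and_iff_left hsq
    rw [Set.mem_symmDiff] at hx
    refine Set.mem_iUnion.2 ⟨β, ?_⟩
    refine Set.mem_prod.2 ⟨?_, hsq, rfl⟩
    rw [Set.mem_symmDiff]
    rcases hx with ⟨h1, h2⟩ | ⟨h1, h2⟩
    · exact Or.inl ⟨hA.1 h1, fun h => h2 (hV.2 h)⟩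
    · exact Or.inr ⟨hV.1 h1, fun h => h2 (hA.2 h)⟩
  · left; exact ⟨trivial, hsq⟩

end MainBound

section CountBounds
variable {d : ℕ}

lemma Dbeta_subset {γ β : Fin d → ℤ} {r s : ℕ} (hsr : s ≤ r) (hβ : β ∈ zbox 0 s) :
    symmDiff ((fun α => α + β) ⁻¹' zbox γ r) (zbox γ r) ⊆
      zbox γ (r+s) \ zbox γ (r-s) := by
  intro α hα
  rw [Set.mem_symmDiff] at hα
  have hβi : ∀ i, |β i| ≤ (s : ℤ) := by
    intro i; have := hβ i; simpa using this
  have hcast : ((r - s : ℕ) : ℤ) = (r : ℤ) - (s : ℤ) := by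
    rw [Nat.cast_sub hsr]
  rcases hα with ⟨h1, h2⟩ | ⟨h1, h2⟩
  · rw [Set.mem_preimage] at h1
    constructor
    · intro i
      have ha := h1 i
      have hb := hβi i
      simp only [Pi.add_apply] at ha
      rw [Nat.cast_add]
      calc |α i - γ i| = |(α i + β i - γ i) - β i| := by ring_nf
        _ ≤ |α i + β i - γ i| + |β i| := abs_sub _ _
        _ ≤ (r : ℤ) + (s : ℤ) := add_le_add ha hb
    · intro hmem
      exact h2 (zbox_mono γ (Nat.sub_le r s) hmem)
  · constructor
    · exact zbox_mono γ (Nat.le_add_right r s) h1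
    · intro hmem
      rw [Set.mem_preimage] at h2
      apply h2
      intro i
      have ha := hmem i
      have hb := hβi i
      rw [hcast] at ha
      simp only [Pi.add_apply]
      have : |α i + β i - γ i| ≤ |α i - γ i| + |β i| := by
        calc |α i + β i - γ i| = |(α i - γ i) + β i| := by ring_nf
          _ ≤ |α i - γ i| + |β i| := abs_add_le _ _
      omega

lemma count_Dbeta_le {γ β : Fin d → ℤ} {r : ℕ} :
    Measure.count (symmDiff ((fun α => α + β) ⁻¹' zbox γ r) (zbox γ r)) ≤
      2 * ((2*r+1)^d : ℕ) := by
  calc Measure.count (symmDiff ((fun α => α + β) ⁻¹' zbox γ r) (zbox γ r))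
      ≤ Measure.count ((fun α => α + β) ⁻¹' zbox γ r ∪ zbox γ r) :=
        measure_mono Set.symmDiff_subset_union
    _ ≤ Measure.count ((fun α => α + β) ⁻¹' zbox γ r) + Measure.count (zbox γ r) :=
        measure_union_le _ _
    _ = ((2*r+1)^d : ℕ) + ((2*r+1)^d : ℕ) := by
        rw [pre_zbox, count_zbox, count_zbox]
    _ = 2 * ((2*r+1)^d : ℕ) := by ring

lemma count_Dbeta_le' {γ β : Fin d → ℤ} {r s : ℕ} (hsr : s ≤ r) (hβ : β ∈ zbox 0 s) :
    Measure.count (symmDiff ((fun α => α + β) ⁻¹' zbox γ r) (zbox γ r)) ≤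
      (((2*(r+s)+1)^d - (2*(r-s)+1)^d : ℕ) : ℝ≥0∞) := by
  calc Measure.count (symmDiff ((fun α => α + β) ⁻¹' zbox γ r) (zbox γ r))
      ≤ Measure.count (zbox γ (r+s) \ zbox γ (r-s)) :=
        measure_mono (Dbeta_subset hsr hβ)
    _ = (((2*(r+s)+1)^d - (2*(r-s)+1)^d : ℕ) : ℝ≥0∞) := by
        rw [count_zbox_diff γ (Nat.sub_le_iff_le_add.2 (by omega))]

end CountBounds

section Estimate
variable {d : ℕ} (R : RW d) (t : ℤ)

lemma main_bound (γ : Fin d → ℤ) (r s : ℕ) (hsr : s ≤ r) :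
    rwMeasure d (symmDiff (R.iterZ t ⁻¹' rwBox γ r) (rwBox γ r)) ≤
      (((2*(r+s)+1)^d - (2*(r-s)+1)^d : ℕ) : ℝ≥0∞)
      + 2 * ((2*r+1)^d : ℕ) * nuM (RW.sq ∩ R.Phi t ⁻¹' (zbox 0 s)ᶜ) := by
  set m : (Fin d → ℤ) → ℝ≥0∞ := fun β => nuM (RW.sq ∩ R.Phi t ⁻¹' {β}) with hm
  set E : ℝ≥0∞ := (((2*(r+s)+1)^d - (2*(r-s)+1)^d : ℕ) : ℝ≥0∞) with hE
  set N : ℝ≥0∞ := (((2*r+1)^d : ℕ) : ℝ≥0∞) with hN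
  calc rwMeasure d (symmDiff (R.iterZ t ⁻¹' rwBox γ r) (rwBox γ r))
      ≤ rwMeasure d ((Set.univ ×ˢ RW.sqᶜ) ∪
          ⋃ β : Fin d → ℤ,
            (symmDiff ((fun α => α + β) ⁻¹' zbox γ r) (zbox γ r))
              ×ˢ (RW.sq ∩ R.Phi t ⁻¹' {β})) :=
        measure_mono (symmDiff_incl R t γ r)
    _ ≤ rwMeasure d (Set.univ ×ˢ RW.sqᶜ) +
        rwMeasure d (⋃ β : Fin d → ℤ,
          (symmDiff ((fun α => α + β) ⁻¹' zbox γ r) (zbox γ r))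
            ×ˢ (RW.sq ∩ R.Phi t ⁻¹' {β})) := measure_union_le _ _
    _ = rwMeasure d (⋃ β : Fin d → ℤ,
          (symmDiff ((fun α => α + β) ⁻¹' zbox γ r) (zbox γ r))
            ×ˢ (RW.sq ∩ R.Phi t ⁻¹' {β})) := by rw [rwMeasure_bad, zero_add]
    _ ≤ ∑' β : Fin d → ℤ, rwMeasure d
          ((symmDiff ((fun α => α + β) ⁻¹' zbox γ r) (zbox γ r))
            ×ˢ (RW.sq ∩ R.Phi t ⁻¹' {β})) := measure_iUnion_le _
    _ = ∑' β : Fin d → ℤ,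
          Measure.count (symmDiff ((fun α => α + β) ⁻¹' zbox γ r) (zbox γ r)) * m β := by
        refine tsum_congr fun β => ?_
        rw [rwMeasure_prod]
    _ ≤ ∑' β : Fin d → ℤ,
          (E * m β + 2 * N * ((zbox 0 s)ᶜ.indicator m β)) := by
        refine ENNReal.tsum_le_tsum fun β => ?_
        by_cases hβ : β ∈ zbox 0 s
        · refine le_trans (mul_le_mul_left (count_Dbeta_le' hsr hβ) (m β)) ?_
          exact le_add_of_nonneg_right (zero_le (a := _))
        · rw [Set.indicator_of_mem (Set.mem_compl hβ)]
          refine le_trans (mul_le_mul_left count_Dbeta_le (m β)) ?_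
          exact le_add_of_nonneg_left (zero_le (a := _))
    _ = E * (∑' β : Fin d → ℤ, m β) +
        2 * N * (∑' β : Fin d → ℤ, (zbox 0 s)ᶜ.indicator m β) := by
        rw [ENNReal.tsum_add, ENNReal.tsum_mul_left, ENNReal.tsum_mul_left]
    _ = E + 2 * N * nuM (RW.sq ∩ R.Phi t ⁻¹' (zbox 0 s)ᶜ) := by
        rw [nuM_fiber_total R t, mul_one, nuM_fiber_sum R t (zbox 0 s)ᶜ]

end Estimate

section Tail
variable {d : ℕ} (R : RW d) (t : ℤ)

instance : IsProbabilityMeasure (nuM) := ⟨nuM_univ⟩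

lemma tail_tendsto :
    Tendsto (fun s : ℕ => nuM (RW.sq ∩ R.Phi t ⁻¹' (zbox 0 s)ᶜ)) atTop (𝓝 0) := by
  have hmeas : ∀ s : ℕ, NullMeasurableSet (RW.sq ∩ R.Phi t ⁻¹' (zbox 0 s)ᶜ) nuM :=
    fun s => (measurableSet_sq.inter
      ((R.measurable_Phi t) (measurableSet_all (zbox 0 s)ᶜ))).nullMeasurableSet
  have hanti : Antitone fun s : ℕ => RW.sq ∩ R.Phi t ⁻¹' (zbox 0 s)ᶜ := by
    intro a b hab
    exact Set.inter_subset_inter_right _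
      (Set.preimage_mono (Set.compl_subset_compl.2 (zbox_mono 0 hab)))
  have hfin : ∃ s : ℕ, nuM (RW.sq ∩ R.Phi t ⁻¹' (zbox 0 s)ᶜ) ≠ ⊤ :=
    ⟨0, measure_ne_top _ _⟩
  have hempty : ⋂ s : ℕ, (RW.sq ∩ R.Phi t ⁻¹' (zbox 0 s)ᶜ) = ∅ := by
    ext y
    simp only [Set.mem_iInter, Set.mem_inter_iff, Set.mem_preimage, Set.mem_compl_iff,
      Set.mem_empty_iff_false, iff_false, not_forall]
    push_neg
    refine ⟨Finset.univ.sup fun i => (R.Phi t y i).natAbs, fun _ => ?_⟩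
    intro i
    simp only [Pi.zero_apply, sub_zero]
    rw [Int.abs_eq_natAbs]
    exact_mod_cast Finset.le_sup (f := fun i => (R.Phi t y i).natAbs) (Finset.mem_univ i)
  have := tendsto_measure_iInter_atTop hmeas hanti hfin
  rw [hempty, measure_empty] at this
  exact this

end Tail

lemma pow_sub_pow_le_aux (a b : ℝ) (hb : 0 ≤ b) (hab : b ≤ a) (n : ℕ) :
    a^n - b^n ≤ (a-b)*n*a^(n-1) := by
  rw [← geom_sum₂_mul]
  have h1 : ∀ i ∈ Finset.range n, a ^ i * b ^ (n - 1 - i) ≤ a^(n-1) := by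
    intro i hi
    rw [Finset.mem_range] at hi
    calc a ^ i * b ^ (n - 1 - i) ≤ a ^ i * a ^ (n - 1 - i) :=
          mul_le_mul_of_nonneg_left (pow_le_pow_left₀ hb hab _) (pow_nonneg (hb.trans hab) _)
      _ = a ^ (i + (n - 1 - i)) := (pow_add a i _).symm
      _ = a ^ (n-1) := by congr 1; omega
  have h2 : (∑ i ∈ Finset.range n, a ^ i * b ^ (n - 1 - i)) ≤ n * a^(n-1) := by
    calc (∑ i ∈ Finset.range n, a ^ i * b ^ (n - 1 - i)) ≤ ∑ _i ∈ Finset.range n, a^(n-1) :=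
        Finset.sum_le_sum h1
      _ = n * a^(n-1) := by simp [Finset.sum_const, nsmul_eq_mul]
  calc (∑ i ∈ Finset.range n, a ^ i * b ^ (n - 1 - i)) * (a - b)
      ≤ (n * a^(n-1)) * (a-b) := mul_le_mul_of_nonneg_right h2 (by linarith)
    _ = (a-b)*n*a^(n-1) := by ring

set_option maxHeartbeats 2000000 in
/-- Lemma 4.2: the random-walk dynamical system with the exhaustive family of boxes
satisfies (A1): for any fixed `t ∈ ℤ`, `μ(T^{-t} V Δ V) = o(μ(V))` as `μ(V) → ∞`
along `𝒱`. -/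
theorem rw_A1 (d : ℕ) (hd : 1 ≤ d) (R : RW d) (t : ℤ) :
    IVLim (rwMeasure d) (rwFamily d)
      (fun V => ((rwMeasure d) (symmDiff (RW.iterZ R t ⁻¹' V) V)).toReal
        / ((rwMeasure d) V).toReal) 0 := by
  intro ε hε
  -- Step 1: choose the cutoff `s` for the displacement distribution.
  have h8 : (0:ℝ≥0∞) < ENNReal.ofReal (ε/8) := ENNReal.ofReal_pos.2 (by linarith)
  obtain ⟨s, hs⟩ := ((tail_tendsto R t).eventually_lt_const h8).exists
  set c' : ℝ := (nuM (RW.sq ∩ R.Phi t ⁻¹' (zbox 0 s)ᶜ)).toReal with hc'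
  have hsR : c' < ε/8 := ENNReal.toReal_lt_of_lt_ofReal hs
  have hc0 : 0 ≤ c' := ENNReal.toReal_nonneg
  -- Step 2: choose the threshold.
  set C0 : ℝ := 4*s*d*(2*(s:ℝ)+1)^(d-1) with hC0def
  have hC0 : 0 ≤ C0 := by positivity
  set K : ℕ := ⌈C0/ε⌉₊ + 1 with hKdef
  set R₀ : ℕ := s + K with hR₀def
  refine ⟨(((2*R₀+1)^d : ℕ) : ℝ), by positivity, ?_⟩
  rintro V ⟨γ, r, hr1, rfl⟩ hMV
  have hμV : ((rwMeasure d) (rwBox γ r)).toReal = (((2*r+1)^d : ℕ) : ℝ) := by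
    rw [rwMeasure_rwBox, ENNReal.toReal_natCast]
  rw [hμV] at hMV
  -- Step 3:从 the threshold deduce `R₀ ≤ r`.
  have hrR : R₀ ≤ r := by
    by_contra hlt
    push_neg at hlt
    have h1 : (2*r+1)^d < (2*R₀+1)^d := Nat.pow_lt_pow_left (by omega) (by omega)
    have h2 := (Nat.cast_lt (α := ℝ)).2 h1
    linarith
  have hsr : s ≤ r := le_trans (Nat.le_add_right s K) hrR
  -- Step 4: apply the main bound and convert to reals.
  have hmb := main_bound R t γ r s hsr
  set NV : ℝ := (((2*r+1)^d : ℕ) : ℝ) with hNVdef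
  have hNVpos : 0 < NV := by positivity
  set E' : ℝ := ((((2*(r+s)+1)^d - (2*(r-s)+1)^d : ℕ)) : ℝ) with hE'def
  have hRHS : ((((2*(r+s)+1)^d - (2*(r-s)+1)^d : ℕ) : ℝ≥0∞)
      + 2 * (((2*r+1)^d : ℕ) : ℝ≥0∞) * nuM (RW.sq ∩ R.Phi t ⁻¹' (zbox 0 s)ᶜ)).toReal
      = E' + 2 * NV * c' := by
    rw [ENNReal.toReal_add (ENNReal.natCast_ne_top _)
      (ENNReal.mul_ne_top (ENNReal.mul_ne_top (by simp) (ENNReal.natCast_ne_top _))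
        (measure_ne_top _ _)),
      ENNReal.toReal_mul, ENNReal.toReal_mul, ENNReal.toReal_natCast, ENNReal.toReal_natCast,
      ENNReal.toReal_ofNat]
  have hΔ : ((rwMeasure d) (symmDiff (RW.iterZ R t ⁻¹' rwBox γ r) (rwBox γ r))).toReal
      ≤ E' + 2 * NV * c' := by
    rw [← hRHS]
    refine ENNReal.toReal_mono ?_ hmb
    exact ENNReal.add_ne_top.2 ⟨ENNReal.natCast_ne_top _,
      ENNReal.mul_ne_top (ENNReal.mul_ne_top (by simp) (ENNReal.natCast_ne_top _))
        (measure_ne_top _ _)⟩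
  -- Step 5: bound E'.
  set a : ℝ := 2*((r:ℝ)+(s:ℝ))+1 with hadef
  set b : ℝ := 2*((r:ℝ)-(s:ℝ))+1 with hbdef
  have hb0 : 0 ≤ b := by
    have : (s:ℝ) ≤ (r:ℝ) := Nat.cast_le.2 hsr
    simp only [hbdef]; linarith
  have hba : b ≤ a := by
    have : (0:ℝ) ≤ (s:ℝ) := Nat.cast_nonneg s
    simp only [hadef, hbdef]; linarith
  have hE'eq : E' = a^d - b^d := by
    have hle : (2*(r-s)+1)^d ≤ (2*(r+s)+1)^d :=
      Nat.pow_le_pow_left (by omega) d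
    have h1 : ((2*(r+s)+1 : ℕ) : ℝ) = a := by rw [hadef]; push_cast; ring
    have h2 : ((2*(r-s)+1 : ℕ) : ℝ) = b := by
      rw [hbdef]; push_cast [Nat.cast_sub hsr]; ring
    rw [hE'def, Nat.cast_sub hle, Nat.cast_pow, Nat.cast_pow, h1, h2]
  have hE'le : E' ≤ C0 * (2*(r:ℝ)+1)^(d-1) := by
    rw [hE'eq]
    have h1 : a^d - b^d ≤ (a-b)*d*a^(d-1) := pow_sub_pow_le_aux a b hb0 hba d
    have hab : a - b = 4*(s:ℝ) := by simp only [hadef, hbdef]; ring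
    have ha0 : 0 ≤ a := hb0.trans hba
    have haup : a ≤ (2*(s:ℝ)+1)*(2*(r:ℝ)+1) := by
      have h1 : (0:ℝ) ≤ (s:ℝ) := Nat.cast_nonneg s
      have h2 : (0:ℝ) ≤ (r:ℝ) := Nat.cast_nonneg r
      simp only [hadef]; nlinarith
    have hpow : a^(d-1) ≤ ((2*(s:ℝ)+1)*(2*(r:ℝ)+1))^(d-1) :=
      pow_le_pow_left₀ ha0 haup _
    calc a^d - b^d ≤ (a-b)*d*a^(d-1) := h1
      _ = 4*(s:ℝ)*d*a^(d-1) := by rw [hab]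
      _ ≤ 4*(s:ℝ)*d*((2*(s:ℝ)+1)*(2*(r:ℝ)+1))^(d-1) := by
          refine mul_le_mul_of_nonneg_left hpow ?_
          positivity
      _ = C0 * (2*(r:ℝ)+1)^(d-1) := by
          rw [hC0def, mul_pow]; ring
  -- Step 6: C0 < (ε/2)(2r+1).
  have hKge : C0/ε + 1 ≤ (K:ℝ) := by
    rw [hKdef]
    push_cast
    have := Nat.le_ceil (C0/ε)
    linarith
  have hC0lt : C0 < (ε/2) * (2*(r:ℝ)+1) := by
    have hrK : (K:ℝ) ≤ (r:ℝ) := Nat.cast_le.2 (le_trans (Nat.le_add_left K s) hrR)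
    have h1 : ε * (K:ℝ) ≥ ε * (C0/ε + 1) := by
      refine mul_le_mul_of_nonneg_left hKge (le_of_lt hε)
    have h2 : ε * (C0/ε + 1) = C0 + ε := by
      field_simp
    nlinarith
  -- Step 7: conclude.
  have hNVeq : NV = (2*(r:ℝ)+1) * (2*(r:ℝ)+1)^(d-1) := by
    rw [hNVdef]
    push_cast
    rw [← pow_succ']
    congr 1
    omega
  have hE'lt : E' < (ε/2) * NV := by
    calc E' ≤ C0 * (2*(r:ℝ)+1)^(d-1) := hE'le
      _ < ((ε/2) * (2*(r:ℝ)+1)) * (2*(r:ℝ)+1)^(d-1) := by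
          refine mul_lt_mul_of_pos_right hC0lt ?_
          positivity
      _ = (ε/2) * NV := by rw [hNVeq]; ring
  simp only [sub_zero]
  rw [abs_of_nonneg (div_nonneg ENNReal.toReal_nonneg ENNReal.toReal_nonneg), hμV]
  rw [div_lt_iff₀ hNVpos]
  have h2NV : 2 * NV * c' < 2 * NV * (ε/8) := by
    refine mul_lt_mul_of_pos_left hsR ?_
    linarith
  nlinarith
end
end

section
/- For the random-walk dynamical system, let F∈L^∞(X,μ) be of the form F(α;y₁,y₂)=F_α(y₁) (independent of y₂), set f_α:=∫₀¹ F_α(y₁)dy₁, and let Q={0}×[0,1)×I where I⊆[0,1) is an interval of length h. Then for every n∈ℕ, ∫_{TⁿQ} F dμ = h · Σ_{β⁽¹⁾,…,β⁽ⁿ⁾∈ℤ^d} p_{β⁽¹⁾}p_{β⁽²⁾}⋯p_{β⁽ⁿ⁾} f_{β⁽¹⁾+⋯+β⁽ⁿ⁾} = h · Σ_{α∈ℤ^d} p^{(n)}_α f_α, where p^{(n)} is the n-fold convolution of p with itself. -/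
noncomputable section

open MeasureTheory Filter Topology

/-- The convolution `(a * b)_α = Σ_β a_β b_{α−β}` on `ℤ^d`. -/
def convZ {d : ℕ} (a b : (Fin d → ℤ) → ℝ) : (Fin d → ℤ) → ℝ :=
  fun α => ∑' β : Fin d → ℤ, a β * b (α - β)

/-- The `n`-fold convolution `p^{(n)} = p * ⋯ * p` (with `p^{(0)} = δ_0`). -/
def convPow {d : ℕ} (p : (Fin d → ℤ) → ℝ) : ℕ → ((Fin d → ℤ) → ℝ)
  | 0 => fun α => if α = 0 then 1 else 0
  | n + 1 => convZ p (convPow p n)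

namespace RWAux

variable {d : ℕ}

abbrev G (d : ℕ) := Fin d → ℤ

def shearEquiv (d : ℕ) : G d × G d ≃ G d × G d where
  toFun x := (x.1 + x.2, x.1)
  invFun y := (y.2, y.1 - y.2)
  left_inv := fun x => by simp
  right_inv := fun x => by simp

lemma prod_nonneg' {p : G d → ℝ} (hp0 : ∀ β, 0 ≤ p β) {n : ℕ} (c : Fin n → G d) :
    0 ≤ ∏ i, p (c i) :=
  Finset.prod_nonneg fun i _ => hp0 _

lemma hasSum_prodPow {p : G d → ℝ} (hp0 : ∀ β, 0 ≤ p β) (hp1 : HasSum p 1) (n : ℕ) :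
    HasSum (fun c : Fin n → G d => ∏ i, p (c i)) 1 := by
  induction n with
  | zero =>
      have h : (fun c : Fin 0 → G d => ∏ i, p (c i)) = fun _ => 1 := by
        funext c; simp
      rw [h]
      have := hasSum_single (f := fun _ : Fin 0 → G d => (1:ℝ))
        (fun _ => (0 : G d)) (fun b hb => absurd (Subsingleton.elim _ _) hb)
      simpa using this
  | succ n ih =>
      have hs : Summable fun x : G d × (Fin n → G d) => p x.1 * ∏ i, p (x.2 i) :=
        Summable.mul_of_nonneg (f := p) (g := fun c : Fin n → G d => ∏ i, p (c i))
          hp1.summable ih.summable hp0 fun c => prod_nonneg' hp0 c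
      have hmul : HasSum (fun x : G d × (Fin n → G d) => p x.1 * ∏ i, p (x.2 i)) 1 := by
        simpa using hp1.mul (f := p) (g := fun c : Fin n → G d => ∏ i, p (c i)) ih hs
      rw [← (Fin.consEquiv (fun _ : Fin (n+1) => G d)).hasSum_iff]
      convert hmul using 1
      funext x
      simp [Fin.consEquiv, Fin.prod_univ_succ]

lemma convPow_spec {p : G d → ℝ} (hp0 : ∀ β, 0 ≤ p β) (hp1 : HasSum p 1) (n : ℕ) :
    (∀ α, 0 ≤ convPow p n α) ∧ HasSum (convPow p n) 1 := by
  induction n with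
  | zero =>
      constructor
      · intro α; by_cases h : α = 0 <;> simp [convPow, h]
      · have := hasSum_ite_eq (0 : G d) (1:ℝ)
        simpa [convPow] using this
  | succ n ih =>
      obtain ⟨hP0, hP1⟩ := ih
      have hs : Summable fun x : G d × G d => p x.1 * convPow p n x.2 :=
        Summable.mul_of_nonneg (f := p) (g := convPow p n)
          hp1.summable hP1.summable hp0 hP0
      have hmul : HasSum (fun x : G d × G d => p x.1 * convPow p n x.2) 1 := by
        simpa using hp1.mul (f := p) (g := convPow p n) hP1 hs
      have hsh : HasSum (fun x : G d × G d => p x.2 * convPow p n (x.1 - x.2)) 1 := by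
        rw [← (shearEquiv d).hasSum_iff]
        convert hmul using 1
        funext x
        simp [shearEquiv]
      constructor
      · intro α
        exact tsum_nonneg fun β => mul_nonneg (hp0 β) (hP0 _)
      · exact hsh.prod_fiberwise fun α => (hsh.summable.prod_factor α).hasSum

lemma conv_tsum {p : G d → ℝ} (hp0 : ∀ β, 0 ≤ p β) (hp1 : HasSum p 1) (n : ℕ) :
    ∀ (g : G d → ℝ) (C : ℝ), (∀ x, |g x| ≤ C) →
    (∑' c : Fin n → G d, (∏ i, p (c i)) * g (∑ i, c i))
      = ∑' α : G d, convPow p n α * g α := by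
  induction n with
  | zero =>
      intro g C hg
      rw [tsum_eq_single (fun _ : Fin 0 => (0 : G d))
            (fun b hb => absurd (Subsingleton.elim _ _) hb),
          tsum_eq_single (0 : G d) (by intro b hb; simp [convPow, hb])]
      simp [convPow]
  | succ n ih =>
      intro g C hg
      obtain ⟨hP0, hP1⟩ := convPow_spec hp0 hp1 n
      -- LHS
      have hL1 : (∑' c : Fin (n+1) → G d, (∏ i, p (c i)) * g (∑ i, c i))
          = ∑' x : G d × (Fin n → G d),
              (p x.1 * ∏ i, p (x.2 i)) * g (x.1 + ∑ i, x.2 i) := by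
        rw [← (Fin.consEquiv (fun _ : Fin (n+1) => G d)).tsum_eq]
        congr 1; funext x
        simp [Fin.consEquiv, Fin.prod_univ_succ, Fin.sum_univ_succ]
      have hsProd : Summable fun x : G d × (Fin n → G d) => p x.1 * ∏ i, p (x.2 i) :=
        Summable.mul_of_nonneg (f := p) (g := fun c : Fin n → G d => ∏ i, p (c i))
          hp1.summable (hasSum_prodPow hp0 hp1 n).summable hp0
          fun c => prod_nonneg' hp0 c
      have hsum : Summable fun x : G d × (Fin n → G d) =>
          (p x.1 * ∏ i, p (x.2 i)) * g (x.1 + ∑ i, x.2 i) := by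
        apply Summable.of_abs
        apply Summable.of_nonneg_of_le (fun x => abs_nonneg _)
            (f := fun x : G d × (Fin n → G d) => (p x.1 * ∏ i, p (x.2 i)) * C)
        · intro x
          rw [abs_mul, abs_of_nonneg (mul_nonneg (hp0 _) (prod_nonneg' hp0 _))]
          exact mul_le_mul_of_nonneg_left (hg _) (mul_nonneg (hp0 _) (prod_nonneg' hp0 _))
        · exact hsProd.mul_right C
      have hL2 : (∑' x : G d × (Fin n → G d),
            (p x.1 * ∏ i, p (x.2 i)) * g (x.1 + ∑ i, x.2 i))
          = ∑' β : G d, p β * ∑' α : G d, convPow p n α * g (β + α) := by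
        rw [Summable.tsum_prod' hsum fun b => hsum.prod_factor b]
        apply tsum_congr; intro β
        have h1 : (fun t : Fin n → G d => (p β * ∏ i, p (t i)) * g (β + ∑ i, t i))
            = fun t => p β * ((∏ i, p (t i)) * g (β + ∑ i, t i)) := by
          funext t; ring
        rw [h1, tsum_mul_left, ih (fun x => g (β + x)) C (fun x => hg _)]
      -- RHS
      have hH : Summable fun x : G d × G d => p x.2 * convPow p n (x.1 - x.2) * g x.1 := by
        apply Summable.of_abs
        apply Summable.of_nonneg_of_le (fun x => abs_nonneg _)
            (f := fun x : G d × G d => (p x.2 * convPow p n (x.1 - x.2)) * C)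
        · intro x
          rw [mul_assoc, abs_mul, abs_of_nonneg (hp0 _), abs_mul,
              abs_of_nonneg (hP0 _), mul_assoc]
          refine mul_le_mul_of_nonneg_left ?_ (hp0 _)
          exact mul_le_mul_of_nonneg_left (hg _) (hP0 _)
        · refine Summable.mul_right C ?_
          rw [← (shearEquiv d).summable_iff]
          have h2 : ((fun x : G d × G d => p x.2 * convPow p n (x.1 - x.2)) ∘ (shearEquiv d))
              = fun x : G d × G d => p x.1 * convPow p n x.2 := by
            funext x; simp [shearEquiv]
          rw [h2]
          exact Summable.mul_of_nonneg (f := p) (g := convPow p n)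
            hp1.summable hP1.summable hp0 hP0
      have hK : Summable fun y : G d × G d => p y.1 * convPow p n (y.2 - y.1) * g y.2 := by
        rw [← (Equiv.prodComm (G d) (G d)).summable_iff]
        exact hH
      have hR1 : (∑' α : G d, convPow p (n+1) α * g α)
          = ∑' y : G d × G d, p y.1 * convPow p n (y.2 - y.1) * g y.2 := by
        have swap : (∑' y : G d × G d, p y.1 * convPow p n (y.2 - y.1) * g y.2)
            = ∑' x : G d × G d, p x.2 * convPow p n (x.1 - x.2) * g x.1 := by
          rw [← (Equiv.prodComm (G d) (G d)).tsum_eq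
            (fun x : G d × G d => p x.2 * convPow p n (x.1 - x.2) * g x.1)]
          exact tsum_congr fun y => by simp
        rw [swap, Summable.tsum_prod' hH fun b => hH.prod_factor b]
        apply tsum_congr; intro α
        have : convPow p (n+1) α = ∑' β, p β * convPow p n (α - β) := rfl
        rw [this, ← tsum_mul_right]
      have hR2 : (∑' y : G d × G d, p y.1 * convPow p n (y.2 - y.1) * g y.2)
          = ∑' β : G d, p β * ∑' α : G d, convPow p n α * g (β + α) := by
        rw [Summable.tsum_prod' hK fun b => hK.prod_factor b]
        apply tsum_congr; intro β
        have h3 : (∑' α : G d, p β * convPow p n (α - β) * g α)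
            = ∑' γ : G d, p β * convPow p n γ * g (β + γ) := by
          rw [← (Equiv.addLeft β).tsum_eq (fun α => p β * convPow p n (α - β) * g α)]
          apply tsum_congr; intro γ
          simp [add_sub_cancel_left]
        rw [h3]
        have h4 : (fun γ : G d => p β * convPow p n γ * g (β + γ))
            = fun γ => p β * (convPow p n γ * g (β + γ)) := by funext γ; ring
        rw [h4, tsum_mul_left]
      rw [hL1, hL2, hR1, hR2]

end RWAux


namespace RWAux2

open Set MeasureTheory

variable {d : ℕ} (R : RW d)

instance : SFinite (Measure.count : Measure (Fin d → ℤ)) := by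
  unfold Measure.count; infer_instance

lemma htot : HasSum (fun j : ℕ => R.p (R.e j)) 1 :=
  R.e.hasSum_iff.mpr R.total

lemma q_mono : Monotone R.q := by
  intro j k hjk
  exact Finset.sum_le_sum_of_subset_of_nonneg
    (Finset.range_subset_range.2 hjk) (fun i _ _ => R.nonneg _)

lemma q_nonneg (k : ℕ) : 0 ≤ R.q k :=
  Finset.sum_nonneg fun i _ => R.nonneg _

lemma q_succ (k : ℕ) : R.q (k+1) = R.q k + R.p (R.e k) :=
  Finset.sum_range_succ _ _

lemma q_le_one (k : ℕ) : R.q k ≤ 1 :=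
  sum_le_hasSum (Finset.range k) (fun i _ => R.nonneg _) (htot R)

lemma exists_q_gt {y : ℝ} (hy : y < 1) : ∃ k, y < R.q k := by
  have h : Filter.Tendsto (fun n => ∑ i ∈ Finset.range n, R.p (R.e i))
      Filter.atTop (nhds 1) := (htot R).tendsto_sum_nat
  have := (h.eventually (eventually_gt_nhds hy)).exists
  simpa [RW.q] using this

lemma idx_eq {y : ℝ} {k : ℕ} (hk1 : R.q k ≤ y) (hk2 : y < R.q (k+1)) : R.idx y = k := by
  have hub : ∀ j ∈ {j | R.q j ≤ y}, j ≤ k := by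
    intro j hj
    by_contra hjk
    push_neg at hjk
    exact absurd (le_trans (q_mono R hjk) hj) (not_le.2 hk2)
  exact le_antisymm (csSup_le ⟨k, hk1⟩ hub) (le_csSup ⟨k, hub⟩ hk1)

lemma idx_spec {y : ℝ} (hy0 : 0 ≤ y) (hy1 : y < 1) :
    R.q (R.idx y) ≤ y ∧ y < R.q (R.idx y + 1) := by
  obtain ⟨k, hk⟩ := exists_q_gt R hy1
  have hne : (0:ℕ) ∈ {j | R.q j ≤ y} := by
    simp only [Set.mem_setOf_eq, RW.q, Finset.range_zero, Finset.sum_empty]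
    exact hy0
  have hbdd : BddAbove {j | R.q j ≤ y} := by
    refine ⟨k, fun j hj => ?_⟩
    by_contra h
    push_neg at h
    exact absurd (le_trans (q_mono R h.le) hj) (not_le.2 hk)
  have hmem : R.idx y ∈ {j | R.q j ≤ y} := Nat.sSup_mem ⟨0, hne⟩ hbdd
  refine ⟨hmem, ?_⟩
  by_contra h
  push_neg at h
  have h2 : R.idx y + 1 ≤ R.idx y := le_csSup hbdd h
  omega

lemma p_idx_pos {y : ℝ} (hy0 : 0 ≤ y) (hy1 : y < 1) : 0 < R.p (R.e (R.idx y)) := by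
  obtain ⟨h1, h2⟩ := idx_spec R hy0 hy1
  have := q_succ R (R.idx y)
  linarith

/-- One-step image of a rectangle. -/
lemma image_T (α : Fin d → ℤ) (u v : ℝ) (h0 : 0 ≤ u) (huv : u ≤ v) (h1 : v ≤ 1) :
    R.T '' ({α} ×ˢ Set.Ico (0:ℝ) 1 ×ˢ Set.Ico u v)
      = ⋃ k : ℕ, ({α + R.e k} ×ˢ Set.Ico (0:ℝ) 1 ×ˢ
          Set.Ico (R.p (R.e k) * u + R.q k) (R.p (R.e k) * v + R.q k)) := by
  ext x
  simp only [Set.mem_image, Set.mem_iUnion, Set.mem_prod, Set.mem_singleton_iff,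
    Set.mem_Ico]
  constructor
  · rintro ⟨⟨a, y1, y2⟩, ⟨rfl, ⟨hy10, hy11⟩, hy2u, hy2v⟩, rfl⟩
    refine ⟨R.idx y1, ?_⟩
    obtain ⟨hq1, hq2⟩ := idx_spec R hy10 hy11
    have hp : 0 < R.p (R.e (R.idx y1)) := p_idx_pos R hy10 hy11
    have hqs := q_succ R (R.idx y1)
    simp only [RW.T]
    refine ⟨by simp, ⟨?_, ?_⟩, ?_, ?_⟩
    · exact div_nonneg (by linarith) hp.le
    · rw [div_lt_one hp]; linarith
    · have := mul_le_mul_of_nonneg_left hy2u hp.le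
      linarith
    · have := mul_lt_mul_of_pos_left hy2v hp
      linarith
  · rintro ⟨k, hx1, ⟨ht0, ht1⟩, hs1, hs2⟩
    obtain ⟨x1, t, s⟩ := x
    simp only at hx1 ht0 ht1 hs1 hs2
    subst hx1
    have hp : 0 < R.p (R.e k) := by
      rcases lt_or_eq_of_le (R.nonneg (R.e k)) with h | h
      · exact h
      · exfalso
        rw [← h] at hs1 hs2
        simp at hs1 hs2
        have h3 : R.p (R.e k) * u ≤ R.p (R.e k) * v :=
          mul_le_mul_of_nonneg_left huv (R.nonneg _)
        linarith
    have hq0 := q_nonneg R k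
    have hq1 := q_le_one R (k+1)
    have hqs := q_succ R k
    set y1 := R.p (R.e k) * t + R.q k with hy1def
    have hy1a : R.q k ≤ y1 := by
      have : 0 ≤ R.p (R.e k) * t := mul_nonneg hp.le ht0
      simp only [hy1def]; linarith
    have hy1b : y1 < R.q (k+1) := by
      have : R.p (R.e k) * t < R.p (R.e k) * 1 := mul_lt_mul_of_pos_left ht1 hp
      simp only [hy1def]; linarith
    have hidx : R.idx y1 = k := idx_eq R hy1a hy1b
    refine ⟨(α + R.e k - R.e k, y1, (s - R.q k) / R.p (R.e k)), ⟨?_, ⟨?_, ?_⟩, ?_, ?_⟩, ?_⟩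
    · simp
    · show (0:ℝ) ≤ y1
      linarith
    · show y1 < 1
      linarith
    · show u ≤ (s - R.q k) / R.p (R.e k)
      rw [le_div_iff₀ hp]; linarith [hs1]
    · show (s - R.q k) / R.p (R.e k) < v
      rw [div_lt_iff₀ hp]; linarith [hs2]
    · simp only [RW.T, hidx]
      refine Prod.ext ?_ (Prod.ext ?_ ?_)
      · simp
      · simp only [hy1def]
        field_simp
        ring
      · simp only
        field_simp
        ring

/-- The iterated affine contraction. -/
def Psi (R : RW d) : (n : ℕ) → (Fin n → ℕ) → ℝ → ℝ
  | 0, _, t => t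
  | n+1, c, t => Psi R n (Fin.tail c) (R.p (R.e (c 0)) * t + R.q (c 0))

lemma Psi_cons (n : ℕ) (k : ℕ) (c : Fin n → ℕ) (t : ℝ) :
    Psi R (n+1) (Fin.cons k c) t = Psi R n c (R.p (R.e k) * t + R.q k) := by
  simp [Psi, Fin.tail_cons]

lemma Psi_mono (n : ℕ) : ∀ (c : Fin n → ℕ) {u v : ℝ}, u ≤ v → Psi R n c u ≤ Psi R n c v := by
  induction n with
  | zero => intro c u v h; exact h
  | succ n ih =>
      intro c u v h
      exact ih _ (by nlinarith [R.nonneg (R.e (c 0)), mul_le_mul_of_nonneg_left h (R.nonneg (R.e (c 0)))])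

lemma Psi_mem (n : ℕ) : ∀ (c : Fin n → ℕ) {t : ℝ}, 0 ≤ t → t ≤ 1 →
    0 ≤ Psi R n c t ∧ Psi R n c t ≤ 1 := by
  induction n with
  | zero => intro c t h0 h1; exact ⟨h0, h1⟩
  | succ n ih =>
      intro c t h0 h1
      have hp := R.nonneg (R.e (c 0))
      have hq0 := q_nonneg R (c 0)
      have hq1 := q_le_one R (c 0 + 1)
      have hqs := q_succ R (c 0)
      refine ih _ ?_ ?_
      · nlinarith
      · nlinarith

lemma Psi_sub (n : ℕ) : ∀ (c : Fin n → ℕ) (u v : ℝ),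
    Psi R n c v - Psi R n c u = (∏ i, R.p (R.e (c i))) * (v - u) := by
  induction n with
  | zero => intro c u v; simp [Psi]
  | succ n ih =>
      intro c u v
      show Psi R n (Fin.tail c) _ - Psi R n (Fin.tail c) _ = _
      rw [ih, Fin.prod_univ_succ]
      simp only [Fin.tail]
      ring

lemma Psi_disjoint (n : ℕ) : ∀ (c c' : Fin n → ℕ) (u v u' v' : ℝ),
    0 ≤ u → u ≤ v → v ≤ 1 → 0 ≤ u' → u' ≤ v' → v' ≤ 1 →
    (c = c' → Disjoint (Set.Ico u v) (Set.Ico u' v')) →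
    Disjoint (Set.Ico (Psi R n c u) (Psi R n c v)) (Set.Ico (Psi R n c' u') (Psi R n c' v')) := by
  induction n with
  | zero =>
      intro c c' u v u' v' _ _ _ _ _ _ h
      exact h (Subsingleton.elim _ _)
  | succ n ih =>
      intro c c' u v u' v' hu huv hv hu' huv' hv' h
      have hp := R.nonneg (R.e (c 0))
      have hp' := R.nonneg (R.e (c' 0))
      have hq0 := q_nonneg R (c 0)
      have hq0' := q_nonneg R (c' 0)
      have hq1 := q_le_one R (c 0 + 1)
      have hq1' := q_le_one R (c' 0 + 1)
      have hqs := q_succ R (c 0)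
      have hqs' := q_succ R (c' 0)
      show Disjoint (Set.Ico (Psi R n (Fin.tail c) _) (Psi R n (Fin.tail c) _)) _
      refine ih (Fin.tail c) (Fin.tail c') _ _ _ _ ?_ ?_ ?_ ?_ ?_ ?_ ?_
      · nlinarith
      · nlinarith [mul_le_mul_of_nonneg_left huv hp]
      · nlinarith
      · nlinarith
      · nlinarith [mul_le_mul_of_nonneg_left huv' hp']
      · nlinarith
      · intro htail
        by_cases hk : c 0 = c' 0
        · have hcc : c = c' := by
            funext i
            refine Fin.cases ?_ (fun j => ?_) i
            · exact hk
            · exact congrFun htail j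
          have hd := h hcc
          rw [Set.Ico_disjoint_Ico] at hd ⊢
          have hmono : Monotone (fun t : ℝ => R.p (R.e (c 0)) * t + R.q (c 0)) := by
            intro x y hxy
            simp only
            nlinarith [mul_le_mul_of_nonneg_left hxy hp]
          have hmin := hmono.map_min (a := v) (b := v')
          have hmax := hmono.map_max (a := u) (b := u')
          rw [← hk, ← hmin, ← hmax]
          exact hmono hd
        · -- different slots
          refine Set.disjoint_left.2 fun x hx hx' => ?_
          simp only [Set.mem_Ico] at hx hx'
          rcases Nat.lt_or_ge (c 0) (c' 0) with hlt | hge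
          · have : R.q (c 0 + 1) ≤ R.q (c' 0) := q_mono R hlt
            nlinarith [hx.1, hx.2, hx'.1, hx'.2]
          · have hlt' : (c' 0) < (c 0) := lt_of_le_of_ne hge (Ne.symm ?_)
            · have : R.q (c' 0 + 1) ≤ R.q (c 0) := q_mono R hlt'
              nlinarith [hx.1, hx.2, hx'.1, hx'.2]
            · exact hk

lemma image_iterate (n : ℕ) : ∀ (α : Fin d → ℤ) (u v : ℝ), 0 ≤ u → u ≤ v → v ≤ 1 →
    (R.T)^[n] '' ({α} ×ˢ Set.Ico (0:ℝ) 1 ×ˢ Set.Ico u v)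
      = ⋃ c : Fin n → ℕ, ({α + ∑ i, R.e (c i)} ×ˢ Set.Ico (0:ℝ) 1 ×ˢ
          Set.Ico (Psi R n c u) (Psi R n c v)) := by
  induction n with
  | zero =>
      intro α u v h0 huv h1
      have hbody : (fun c : Fin 0 → ℕ => ({α + ∑ i, R.e (c i)} ×ˢ Set.Ico (0:ℝ) 1 ×ˢ
          Set.Ico (Psi R 0 c u) (Psi R 0 c v)))
          = fun _ => ({α} ×ˢ Set.Ico (0:ℝ) 1 ×ˢ Set.Ico u v) := by
        funext c
        simp [Psi]
      rw [Function.iterate_zero, Set.image_id, hbody, Set.iUnion_const]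
  | succ n ih =>
      intro α u v h0 huv h1
      rw [Function.iterate_succ, Set.image_comp, image_T R α u v h0 huv h1,
        Set.image_iUnion]
      have hpiece : ∀ k : ℕ, (R.T)^[n] '' ({α + R.e k} ×ˢ Set.Ico (0:ℝ) 1 ×ˢ
          Set.Ico (R.p (R.e k) * u + R.q k) (R.p (R.e k) * v + R.q k))
          = ⋃ c : Fin n → ℕ, ({α + R.e k + ∑ i, R.e (c i)} ×ˢ Set.Ico (0:ℝ) 1 ×ˢ
              Set.Ico (Psi R n c (R.p (R.e k) * u + R.q k))
                (Psi R n c (R.p (R.e k) * v + R.q k))) := by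
        intro k
        have hp := R.nonneg (R.e k)
        have hq0 := q_nonneg R k
        have hq1 := q_le_one R (k+1)
        have hqs := q_succ R k
        refine ih (α + R.e k) _ _ ?_ ?_ ?_
        · nlinarith
        · nlinarith [mul_le_mul_of_nonneg_left huv hp]
        · nlinarith
      simp only [hpiece]
      ext x
      simp only [Set.mem_iUnion]
      constructor
      · rintro ⟨k, t, hx⟩
        refine ⟨Fin.cons k t, ?_⟩
        rw [Psi_cons, Psi_cons, Fin.sum_univ_succ]
        simpa [Fin.cons_zero, Fin.cons_succ, add_assoc] using hx
      · rintro ⟨c, hx⟩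
        refine ⟨c 0, Fin.tail c, ?_⟩
        rw [← Fin.cons_self_tail c] at hx
        rw [Psi_cons, Psi_cons, Fin.sum_univ_succ] at hx
        simpa [Fin.cons_zero, Fin.cons_succ, add_assoc] using hx


lemma measure_piece (γ : Fin d → ℤ) (A B : ℝ) (h0 : 0 ≤ A) (h1 : B ≤ 1) :
    rwMeasure d ({γ} ×ˢ Set.Ico (0:ℝ) 1 ×ˢ Set.Ico A B) = ENNReal.ofReal (B - A) := by
  rw [rwMeasure, Measure.prod_prod, Measure.prod_prod, Measure.count_singleton,
    Measure.restrict_apply measurableSet_Ico, Measure.restrict_apply measurableSet_Ico,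
    Set.inter_self, Set.inter_eq_self_of_subset_left (Set.Ico_subset_Ico h0 h1)]
  simp [Real.volume_Ico]

lemma integral_piece (F : RWSpace d → ℝ) (hFmeas : Measurable F) (C : ℝ)
    (hFbdd : ∀ x, |F x| ≤ C)
    (hFs : ∀ (α : Fin d → ℤ) (y₁ y₂ y₂' : ℝ), F (α, y₁, y₂) = F (α, y₁, y₂'))
    (γ : Fin d → ℤ) (A B : ℝ) (h0 : 0 ≤ A) (hAB : A ≤ B) (h1 : B ≤ 1) :
    ∫ x in ({γ} ×ˢ Set.Ico (0:ℝ) 1 ×ˢ Set.Ico A B), F x ∂(rwMeasure d)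
      = (B - A) * ∫ y in Set.Ico (0:ℝ) 1, F (γ, y, 0) := by
  have hfin1 : IsFiniteMeasure (volume.restrict (Set.Ico (0:ℝ) 1)) :=
    ⟨by rw [Measure.restrict_apply_univ]; exact measure_Ico_lt_top⟩
  have hfin2 : IsFiniteMeasure (volume.restrict (Set.Ico A B)) :=
    ⟨by rw [Measure.restrict_apply_univ]; exact measure_Ico_lt_top⟩
  have hrestrict : (rwMeasure d).restrict ({γ} ×ˢ Set.Ico (0:ℝ) 1 ×ˢ Set.Ico A B)
      = ((Measure.dirac γ).prod
          ((volume.restrict (Set.Ico (0:ℝ) 1)).prod (volume.restrict (Set.Ico A B)))) := by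
    rw [rwMeasure, ← Measure.prod_restrict]
    congr 1
    · rw [Measure.restrict_singleton, Measure.count_singleton, one_smul]
    · rw [← Measure.prod_restrict, Measure.restrict_restrict measurableSet_Ico,
        Measure.restrict_restrict measurableSet_Ico, Set.inter_self,
        Set.inter_eq_self_of_subset_left (Set.Ico_subset_Ico h0 h1)]
  rw [hrestrict, Measure.dirac_prod,
    integral_map measurable_prodMk_left.aemeasurable hFmeas.aestronglyMeasurable]
  have hInt : Integrable (fun z : ℝ × ℝ => F (γ, z))
      ((volume.restrict (Set.Ico (0:ℝ) 1)).prod (volume.restrict (Set.Ico A B))) := by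
    refine Integrable.mono' (integrable_const C)
      ((hFmeas.comp measurable_prodMk_left).aestronglyMeasurable) ?_
    filter_upwards with z
    rw [Real.norm_eq_abs]
    exact hFbdd _
  rw [MeasureTheory.integral_prod _ hInt]
  have hinner : ∀ y1 : ℝ, (∫ y2, F (γ, (y1, y2)) ∂(volume.restrict (Set.Ico A B)))
      = (B - A) * F (γ, y1, 0) := by
    intro y1
    have hfun : (fun y2 => F (γ, (y1, y2))) = fun _ => F (γ, y1, 0) :=
      funext fun y2 => hFs γ y1 y2 0
    rw [hfun, integral_const, measureReal_def, Measure.restrict_apply_univ, Real.volume_Ico,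
      ENNReal.toReal_ofReal (by linarith : (0:ℝ) ≤ B - A), smul_eq_mul]
  simp only [hinner]
  rw [MeasureTheory.integral_const_mul]

lemma hasSum_prodPowN (n : ℕ) :
    HasSum (fun c : Fin n → ℕ => ∏ i, R.p (R.e (c i))) 1 := by
  have h := (Equiv.piCongrRight (fun _ : Fin n => R.e)).hasSum_iff.mpr
    (RWAux.hasSum_prodPow R.nonneg R.total n)
  exact h

lemma pieces_disjoint (n : ℕ) (a b : ℝ) (h0 : 0 ≤ a) (hab : a ≤ b) (hb : b ≤ 1) :
    Pairwise (Function.onFun Disjoint (fun c : Fin n → ℕ =>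
      ({(0:Fin d → ℤ) + ∑ i, R.e (c i)} ×ˢ Set.Ico (0:ℝ) 1 ×ˢ
        Set.Ico (Psi R n c a) (Psi R n c b)))) := by
  intro c c' hne
  have hd := Psi_disjoint R n c c' a b a b h0 hab hb h0 hab hb
    (fun hcc => absurd hcc hne)
  refine Set.disjoint_left.2 fun x hx hx' => ?_
  exact Set.disjoint_left.1 hd hx.2.2 hx'.2.2

end RWAux2

/-- Equations (5.13) and (5.16): for an essentially bounded observable of the form
`F(α; y₁, y₂) = F_α(y₁)` and `Q = {0} × [0,1) × I` with `I = [a,b) ⊆ [0,1)` of length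
`h = b − a`, one has
`∫_{TⁿQ} F dμ = h Σ_{β⁽¹⁾,…,β⁽ⁿ⁾} p_{β⁽¹⁾} ⋯ p_{β⁽ⁿ⁾} f_{β⁽¹⁾+⋯+β⁽ⁿ⁾}
             = h Σ_α p^{(n)}_α f_α`,
where `f_α = ∫₀¹ F_α(y₁) dy₁`. -/
theorem rw_pushforward_integral (d : ℕ) (hd : 1 ≤ d) (R : RW d)
    (F : RWSpace d → ℝ) (hFmeas : Measurable F) (C : ℝ) (hFbdd : ∀ x, |F x| ≤ C)
    (hFs : ∀ (α : Fin d → ℤ) (y₁ y₂ y₂' : ℝ), F (α, y₁, y₂) = F (α, y₁, y₂'))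
    (a b : ℝ) (h0 : 0 ≤ a) (hab : a ≤ b) (hb : b ≤ 1) (n : ℕ) :
    (∫ x in (R.T)^[n] '' ({(0 : Fin d → ℤ)} ×ˢ (Set.Ico (0:ℝ) 1 ×ˢ Set.Ico a b)),
        F x ∂(rwMeasure d))
      = (b - a) * (∑' c : Fin n → (Fin d → ℤ),
          (∏ i, R.p (c i)) * ∫ y in Set.Ico (0:ℝ) 1, F ((∑ i, c i), y, 0)) ∧
    (∫ x in (R.T)^[n] '' ({(0 : Fin d → ℤ)} ×ˢ (Set.Ico (0:ℝ) 1 ×ˢ Set.Ico a b)),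
        F x ∂(rwMeasure d))
      = (b - a) * (∑' α : Fin d → ℤ,
          convPow R.p n α * ∫ y in Set.Ico (0:ℝ) 1, F (α, y, 0)) := by
  classical
  open RWAux2 in
  set f : (Fin d → ℤ) → ℝ := fun γ => ∫ y in Set.Ico (0:ℝ) 1, F (γ, y, 0) with hfdef
  have hfin1 : IsFiniteMeasure (volume.restrict (Set.Ico (0:ℝ) 1)) :=
    ⟨by rw [Measure.restrict_apply_univ]; exact measure_Ico_lt_top⟩
  have hCf : ∀ γ, |f γ| ≤ C := by
    intro γ
    have h := norm_integral_le_of_norm_le_const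
      (μ := volume.restrict (Set.Ico (0:ℝ) 1)) (f := fun y => F (γ, y, 0)) (C := C)
      (by filter_upwards with y; rw [Real.norm_eq_abs]; exact hFbdd _)
    rw [Real.norm_eq_abs] at h
    calc |f γ| ≤ C * ((volume.restrict (Set.Ico (0:ℝ) 1)) Set.univ).toReal := h
      _ = C := by
        rw [Measure.restrict_apply_univ, Real.volume_Ico]
        norm_num
  set s : (Fin n → ℕ) → Set (RWSpace d) := fun c =>
    {(0 : Fin d → ℤ) + ∑ i, R.e (c i)} ×ˢ Set.Ico (0:ℝ) 1 ×ˢ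
      Set.Ico (RWAux2.Psi R n c a) (RWAux2.Psi R n c b) with hsdef
  have hmeas : ∀ c, MeasurableSet (s c) := fun c =>
    (measurableSet_singleton _).prod (measurableSet_Ico.prod measurableSet_Ico)
  have hdisj : Pairwise (Function.onFun Disjoint s) := pieces_disjoint R n a b h0 hab hb
  have hμle : rwMeasure d (⋃ c, s c) ≤ 1 := by
    refine le_trans (measure_iUnion_le s) ?_
    have hb1 : ∀ c : Fin n → ℕ,
        rwMeasure d (s c) ≤ ENNReal.ofReal (∏ i, R.p (R.e (c i))) := by
      intro c
      have hma := Psi_mem R n c h0 (le_trans hab hb)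
      have hmb := Psi_mem R n c (le_trans h0 hab) hb
      rw [hsdef]
      rw [measure_piece _ _ _ hma.1 hmb.2]
      refine ENNReal.ofReal_le_ofReal ?_
      rw [Psi_sub]
      nlinarith [Finset.prod_nonneg (fun i _ => R.nonneg (R.e (c i))) (s := Finset.univ)]
    refine le_trans (ENNReal.tsum_le_tsum hb1) ?_
    rw [← ENNReal.ofReal_tsum_of_nonneg (fun c : Fin n → ℕ => Finset.prod_nonneg fun i _ => R.nonneg (R.e (c i)))
        (hasSum_prodPowN R n).summable, (hasSum_prodPowN R n).tsum_eq]
    simp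
  have hInt : IntegrableOn F (⋃ c, s c) (rwMeasure d) :=
    Measure.integrableOn_of_bounded (lt_of_le_of_lt hμle ENNReal.one_lt_top).ne
      hFmeas.aestronglyMeasurable
      (by filter_upwards with x; rw [Real.norm_eq_abs]; exact hFbdd x)
  have key : (∫ x in (R.T)^[n] '' ({(0 : Fin d → ℤ)} ×ˢ (Set.Ico (0:ℝ) 1 ×ˢ Set.Ico a b)),
        F x ∂(rwMeasure d))
      = (b - a) * ∑' c : Fin n → ℕ, (∏ i, R.p (R.e (c i))) * f (∑ i, R.e (c i)) := by
    rw [image_iterate R n 0 a b h0 hab hb]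
    rw [show (⋃ c : Fin n → ℕ, ({(0:Fin d → ℤ) + ∑ i, R.e (c i)} ×ˢ Set.Ico (0:ℝ) 1 ×ˢ
        Set.Ico (RWAux2.Psi R n c a) (RWAux2.Psi R n c b))) = ⋃ c, s c from rfl]
    rw [integral_iUnion hmeas hdisj hInt]
    have hterm : ∀ c : Fin n → ℕ, (∫ x in s c, F x ∂(rwMeasure d))
        = (b - a) * ((∏ i, R.p (R.e (c i))) * f (∑ i, R.e (c i))) := by
      intro c
      have hma := Psi_mem R n c h0 (le_trans hab hb)
      have hmb := Psi_mem R n c (le_trans h0 hab) hb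
      rw [hsdef]
      rw [integral_piece F hFmeas C hFbdd hFs _ _ _ hma.1 (Psi_mono R n c hab) hmb.2,
        Psi_sub, zero_add, hfdef]
      ring
    rw [tsum_congr hterm, tsum_mul_left]
  have hre : (∑' c : Fin n → ℕ, (∏ i, R.p (R.e (c i))) * f (∑ i, R.e (c i)))
      = ∑' c : Fin n → (Fin d → ℤ), (∏ i, R.p (c i)) * f (∑ i, c i) :=
    (Equiv.piCongrRight (fun _ : Fin n => R.e)).tsum_eq
      (fun c : Fin n → (Fin d → ℤ) => (∏ i, R.p (c i)) * f (∑ i, c i))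
  have part1 : (∫ x in (R.T)^[n] '' ({(0 : Fin d → ℤ)} ×ˢ (Set.Ico (0:ℝ) 1 ×ˢ Set.Ico a b)),
        F x ∂(rwMeasure d))
      = (b - a) * ∑' c : Fin n → (Fin d → ℤ), (∏ i, R.p (c i)) * f (∑ i, c i) := by
    rw [key, hre]
  refine ⟨part1, ?_⟩
  rw [part1, RWAux.conv_tsum R.nonneg R.total n f C hCf]
end
end
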